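/- Let G be a group (possibly infinite) whose central quotient G/Z(G) has order pqr, where p, q, r are primes (not necessarily distinct). Then for every x in G not in Z(G), the centralizer C_G(x) is abelian. -/

import Mathlib

open Subgroup ArithmeticFunction
open scoped ArithmeticFunction.Omega

lemma aux_omega_ne_zero {n : ℕ} (h0 : n ≠ 0) (h1 : n ≠ 1) : 1 ≤ Ω n := by
  rw [cardFactors_apply]
  rcases Nat.exists_prime_and_dvd h1 with ⟨s, hs, hdvd⟩
  have : s ∈ n.primeFactorsList := (Nat.mem_primeFactorsList h0).mpr ⟨hs, hdvd⟩
  exact List.length_pos_iff.mpr (List.ne_nil_of_mem this)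

lemma aux_omega_zero {n : ℕ} (h0 : n ≠ 0) (h : Ω n = 0) : n = 1 := by
  rw [cardFactors_apply, List.length_eq_zero_iff] at h
  rcases (Nat.primeFactorsList_eq_nil _).mp h with h' | h' <;> omega

/-- If `a * m * c = p * q * r` with `p, q, r` prime and `a, c ≠ 1`,
then `m` is `1` or prime. -/
lemma aux_one_or_prime {p q r a m c : ℕ} (hp : p.Prime) (hq : q.Prime) (hr : r.Prime)
    (h : a * m * c = p * q * r) (ha : a ≠ 1) (hc : c ≠ 1) : m = 1 ∨ m.Prime := by
  have hpqr : p * q * r ≠ 0 :=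
    Nat.mul_ne_zero (Nat.mul_ne_zero hp.ne_zero hq.ne_zero) hr.ne_zero
  have ha0 : a ≠ 0 := by rintro rfl; simp only [zero_mul, mul_zero] at h; exact hpqr h.symm
  have hm0 : m ≠ 0 := by rintro rfl; simp only [zero_mul, mul_zero] at h; exact hpqr h.symm
  have hc0 : c ≠ 0 := by rintro rfl; simp only [zero_mul, mul_zero] at h; exact hpqr h.symm
  have hΩ : Ω a + Ω m + Ω c = 3 := by
    have := congrArg Ω h
    rw [cardFactors_mul (Nat.mul_ne_zero ha0 hm0) hc0, cardFactors_mul ha0 hm0,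
      cardFactors_mul (Nat.mul_ne_zero hp.ne_zero hq.ne_zero) hr.ne_zero,
      cardFactors_mul hp.ne_zero hq.ne_zero,
      cardFactors_apply_prime hp, cardFactors_apply_prime hq, cardFactors_apply_prime hr] at this
    omega
  have haΩ : 1 ≤ Ω a := aux_omega_ne_zero ha0 ha
  have hcΩ : 1 ≤ Ω c := aux_omega_ne_zero hc0 hc
  have hmΩ : Ω m ≤ 1 := by omega
  interval_cases hΩm : Ω m
  · exact Or.inl (aux_omega_zero hm0 hΩm)
  · exact Or.inr (cardFactors_eq_one_iff_prime.mp hΩm)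

theorem centralizer_abelian_of_card_central_quotient_eq_pqr
    (G : Type*) [Group G] (p q r : ℕ)
    (hp : p.Prime) (hq : q.Prime) (hr : r.Prime)
    (h : Nat.card (G ⧸ Subgroup.center G) = p * q * r)
    (x : G) (hx : x ∉ Subgroup.center G) :
    ∀ a ∈ Subgroup.centralizer ({x} : Set G),
      ∀ b ∈ Subgroup.centralizer ({x} : Set G), a * b = b * a := by
  intro a ha b hb
  set Z := Subgroup.center G with hZ
  set C := Subgroup.centralizer ({x} : Set G) with hCdef
  set N := Subgroup.centralizer (C : Set G) ⊓ C with hNdef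
  have hxC : x ∈ C := by
    rw [hCdef, mem_centralizer_iff]; rintro y rfl; rfl
  have hxN : x ∈ N := by
    refine Subgroup.mem_inf.mpr ⟨?_, hxC⟩
    rw [mem_centralizer_iff]
    intro g hg
    exact (mem_centralizer_iff.mp hg x rfl).symm
  have hZN : Z ≤ N := le_inf (center_le_centralizer _) (center_le_centralizer _)
  have hNC : N ≤ C := inf_le_right
  have hZC : Z ≤ C := hZN.trans hNC
  -- index computation
  have hidx : Z.index = p * q * r := h
  have key : Z.relIndex N * N.relIndex C * C.index = p * q * r := by
    rw [relIndex_mul_relIndex Z N C hZN hNC, relIndex_mul_index hZC, hidx]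
  have hZNne : Z.relIndex N ≠ 1 := by
    intro h1
    exact hx (relIndex_eq_one.mp h1 hxN)
  have hCne : C.index ≠ 1 := by
    intro h1
    apply hx
    rw [Subgroup.mem_center_iff]
    intro g
    have : g ∈ C := by rw [index_eq_one.mp h1]; trivial
    exact (mem_centralizer_iff.mp this x rfl).symm
  have hm : N.relIndex C = 1 ∨ (N.relIndex C).Prime :=
    aux_one_or_prime hp hq hr key hZNne hCne
  -- identify N.subgroupOf C with center C
  have hcenter : N.subgroupOf C = Subgroup.center C := by
    ext ⟨c, hc⟩
    rw [mem_subgroupOf, Subgroup.mem_center_iff, hNdef, Subgroup.mem_inf]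
    constructor
    · rintro ⟨h1, -⟩ ⟨d, hd⟩
      exact Subtype.ext (mem_centralizer_iff.mp h1 d hd)
    · intro h1
      refine ⟨mem_centralizer_iff.mpr fun g hg => ?_, hc⟩
      exact congrArg Subtype.val (h1 ⟨g, hg⟩)
  have hcard : (Subgroup.center C).index = N.relIndex C := by
    rw [← hcenter]; rfl
  -- conclude commutativity in C
  have habC : (⟨a, ha⟩ : C) * ⟨b, hb⟩ = ⟨b, hb⟩ * ⟨a, ha⟩ := by
    rcases hm with h1 | hprime
    · have htop : Subgroup.center C = ⊤ := index_eq_one.mp (hcard.trans h1)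
      have hb' : (⟨b, hb⟩ : C) ∈ Subgroup.center C := htop ▸ Subgroup.mem_top _
      exact Subgroup.mem_center_iff.mp hb' _
    · have hcard' : Nat.card (C ⧸ Subgroup.center C) = N.relIndex C := hcard
      haveI : Fact (N.relIndex C).Prime := ⟨hprime⟩
      have : IsCyclic (C ⧸ Subgroup.center C) :=
        isCyclic_of_prime_card (p := N.relIndex C) hcard'
      exact commutative_of_cyclic_center_quotient (QuotientGroup.mk' (Subgroup.center C))
        (by rw [QuotientGroup.ker_mk']) _ _
  exact congrArg Subtype.val habC
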